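/- arXiv:1511.07847 — 3 statements merged into one kernel-verified Lean document; each statement's English description precedes it below -/
import Mathlib

section
/- Let G be a simple graph. Then the following two conditions are equivalent: (i) any two cycles of G whose edge sets are distinct have disjoint edge sets (equivalently, every edge of G is contained in at most one simple cycle); (ii) any two cycles of G whose edge sets are distinct have at most one vertex in common. -/
open SimpleGraph Walk

section Aux

variable {V : Type*} [DecidableEq V] {G : SimpleGraph V}

private lemma exists_edge_of_ne {x y : V} (W : G.Walk x y) (h : x ≠ y) : ∃ e, e ∈ W.edges := by
  cases W with
  | nil => exact absurd rfl h
  | cons h' q => exact ⟨_, List.mem_cons_self⟩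

private lemma end_mem_tail {x y : V} (W : G.Walk x y) (h : x ≠ y) : y ∈ W.support.tail := by
  cases W with
  | nil => exact absurd rfl h
  | cons h' q => simpa using q.end_mem_support

private lemma end_mem_tail' {x : V} (W : G.Walk x x) (h : ¬ W.Nil) : x ∈ W.support.tail := by
  cases W with
  | nil => simp at h
  | cons h' q => simpa using q.end_mem_support

private lemma mem_support_rotate {u x : V} {c : G.Walk x x} (hc : ¬ c.Nil) (h : u ∈ c.support) :
    ∀ w, w ∈ (c.rotate u h).support ↔ w ∈ c.support := by
  intro w
  have hrnil : ¬ (c.rotate u h).Nil := by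
    intro hn
    apply hc
    rw [Walk.nil_iff_length_eq] at hn ⊢
    have : (c.rotate u h).support.tail.length = c.support.tail.length :=
      (Walk.support_rotate c u h).perm.length_eq
    have h1 : (c.rotate u h).support.length = (c.rotate u h).length + 1 := Walk.length_support _
    have h2 : c.support.length = c.length + 1 := Walk.length_support _
    have h3 : (c.rotate u h).support = u :: (c.rotate u h).support.tail := Walk.support_eq_cons _
    have h4 : c.support = x :: c.support.tail := Walk.support_eq_cons _
    rw [h3] at h1; rw [h4] at h2
    simp only [List.length_cons] at h1 h2
    omega
  have key : ∀ {a : V} (d : G.Walk a a), ¬ d.Nil → ∀ v, (v ∈ d.support ↔ v ∈ d.support.tail) := by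
    intro a d hd v
    constructor
    · intro hv
      rw [Walk.mem_support_iff] at hv
      rcases hv with rfl | hv
      · exact end_mem_tail' d hd
      · exact hv
    · intro hv
      rw [Walk.mem_support_iff]
      exact Or.inr hv
  rw [key _ hrnil, key _ hc]
  exact (Walk.support_rotate c u h).perm.mem_iff

/-- In a cycle, splitting at any vertex different from the base point gives two paths. -/
private lemma cycle_split {x y : V} {c : G.Walk x x} (hc : c.IsCycle) (hy : y ∈ c.support)
    (hyx : y ≠ x) : (c.takeUntil y hy).IsPath ∧ (c.dropUntil y hy).IsPath := by
  have hspec : (c.takeUntil y hy).append (c.dropUntil y hy) = c := Walk.take_spec c hy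
  have htail : c.support.tail = (c.takeUntil y hy).support.tail ++ (c.dropUntil y hy).support.tail := by
    conv_lhs => rw [← hspec]
    rw [Walk.tail_support_append]
  have hnodup := hc.support_nodup
  rw [htail, List.nodup_append] at hnodup
  obtain ⟨hT, hD, hdisj⟩ := hnodup
  have hyT : y ∈ (c.takeUntil y hy).support.tail := end_mem_tail _ (fun h => hyx h.symm)
  have hxD : x ∈ (c.dropUntil y hy).support.tail := end_mem_tail _ hyx
  constructor
  · refine ⟨hc.isTrail.takeUntil hy, ?_⟩
    rw [Walk.support_eq_cons, List.nodup_cons]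
    exact ⟨fun hx' => hdisj _ hx' _ hxD rfl, hT⟩
  · refine ⟨hc.isTrail.dropUntil hy, ?_⟩
    rw [Walk.support_eq_cons, List.nodup_cons]
    exact ⟨fun hy' => hdisj _ hyT _ hy' rfl, hD⟩

/-- From a path between two vertices of a set `P`, avoiding the edges `pE`, extract a
segment whose endpoints are in `P` but all internal vertices avoid `P`. -/
private lemma exists_segment (P : V → Prop) (pE : Sym2 V → Prop) :
    ∀ (n : ℕ) (a b : V) (W : G.Walk a b), W.length = n → W.IsPath → a ≠ b → P a → P b →
      (∀ e ∈ W.edges, ¬ pE e) →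
      ∃ (x y : V) (S : G.Walk x y), x ≠ y ∧ P x ∧ P y ∧ S.IsPath ∧
        (∀ e ∈ S.edges, ¬ pE e) ∧ (∀ v ∈ S.support, P v → v = x ∨ v = y) := by
  intro n
  induction n using Nat.strong_induction_on with
  | _ n ih =>
    intro a b W hlen hW hab ha hb hE
    by_cases hint : ∀ v ∈ W.support, P v → v = a ∨ v = b
    · exact ⟨a, b, W, hab, ha, hb, hW, hE, hint⟩
    · push_neg at hint
      obtain ⟨c, hcW, hcP, hca, hcb⟩ := hint
      have hlt : (W.takeUntil c hcW).length < n := by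
        have h1 : (W.takeUntil c hcW).length + (W.dropUntil c hcW).length = n := by
          rw [← hlen, ← Walk.length_append, Walk.take_spec]
        have h2 : (W.dropUntil c hcW).length ≠ 0 := fun h0 => hcb (Walk.eq_of_length_eq_zero h0)
        omega
      exact ih _ hlt a c _ rfl (hW.takeUntil hcW) (fun h => hca h.symm) ha hcP
        (fun e he => hE e (Walk.edges_takeUntil_subset _ _ he))

end Aux

/-- In a simple graph, any two cycles with distinct edge sets are edge-disjoint
(every edge lies on at most one simple cycle) iff any two cycles with distinct
edge sets share at most one vertex. -/
theorem stmt2 {V : Type*} [DecidableEq V] (G : SimpleGraph V) :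
    (∀ (u v : V) (p : G.Walk u u) (q : G.Walk v v), p.IsCycle → q.IsCycle →
        p.edges.toFinset ≠ q.edges.toFinset →
        Disjoint p.edges.toFinset q.edges.toFinset) ↔
    (∀ (u v : V) (p : G.Walk u u) (q : G.Walk v v), p.IsCycle → q.IsCycle →
        p.edges.toFinset ≠ q.edges.toFinset →
        (p.support.toFinset ∩ q.support.toFinset).card ≤ 1) := by
  constructor
  · -- edge-disjoint implies at most one common vertex
    intro h u v p q hp hq hne
    by_contra hcard
    push_neg at hcard
    rw [Finset.one_lt_card] at hcard
    obtain ⟨a, haI, b, hbI, hab⟩ := hcard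
    simp only [Finset.mem_inter, List.mem_toFinset] at haI hbI
    obtain ⟨hap, haq⟩ := haI
    obtain ⟨hbp, hbq⟩ := hbI
    have hdisj := h u v p q hp hq hne
    rw [Finset.disjoint_left] at hdisj
    have hpq : ∀ e ∈ p.edges, e ∉ q.edges := by
      intro e hep heq
      exact hdisj (List.mem_toFinset.mpr hep) (List.mem_toFinset.mpr heq)
    -- rotate q to start at a
    have hq' : (q.rotate a haq).IsCycle := hq.rotate haq
    have hbq' : b ∈ (q.rotate a haq).support := (mem_support_rotate hq.not_nil haq b).mpr hbq
    have hQpath : ((q.rotate a haq).takeUntil b hbq').IsPath :=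
      (cycle_split hq' hbq' (fun hba => hab hba.symm)).1
    have hQE : ∀ e ∈ ((q.rotate a haq).takeUntil b hbq').edges, ¬ e ∈ p.edges := by
      intro e he hep
      have : e ∈ (q.rotate a haq).edges := Walk.edges_takeUntil_subset _ _ he
      have : e ∈ q.edges := (Walk.rotate_edges q a haq).perm.mem_iff.mp this
      exact hpq e hep this
    obtain ⟨x, y, S, hxy, hxP, hyP, hS, hSE, hSint⟩ :=
      exists_segment (fun w => w ∈ p.support) (fun e => e ∈ p.edges)
        ((q.rotate a haq).takeUntil b hbq').length a b _ rfl hQpath hab hap hbp hQE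
    -- rotate p to start at x
    have hp'' : (p.rotate x hxP).IsCycle := hp.rotate hxP
    have hyP'' : y ∈ (p.rotate x hxP).support := (mem_support_rotate hp.not_nil hxP y).mpr hyP
    have hD : ((p.rotate x hxP).dropUntil y hyP'').IsPath :=
      (cycle_split hp'' hyP'' (fun hyx => hxy hyx.symm)).2
    set D := (p.rotate x hxP).dropUntil y hyP'' with hDdef
    have hDE : ∀ e ∈ D.edges, e ∈ p.edges := fun e he =>
      (Walk.rotate_edges p x hxP).perm.mem_iff.mp (Walk.edges_dropUntil_subset _ _ he)
    have hDsup : ∀ w ∈ D.support, w ∈ p.support := fun w hw =>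
      (mem_support_rotate hp.not_nil hxP w).mp (Walk.support_dropUntil_subset _ _ hw)
    set C := S.append D with hCdef
    have hCtrail : C.IsTrail := by
      rw [Walk.isTrail_def, Walk.edges_append, List.nodup_append]
      exact ⟨hS.isTrail.edges_nodup, hD.isTrail.edges_nodup,
        fun e heS f heD hef => hSE e heS (hef ▸ hDE f heD)⟩
    have hCcyc : C.IsCycle := by
      rw [Walk.isCycle_def]
      refine ⟨hCtrail, ?_, ?_⟩
      · intro h0
        have hl := congrArg Walk.length h0
        rw [hCdef, Walk.length_append] at hl
        simp only [Walk.length_nil] at hl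
        exact hxy (Walk.eq_of_length_eq_zero (by omega : S.length = 0))
      · rw [hCdef, Walk.tail_support_append, List.nodup_append]
        refine ⟨hS.support_nodup.tail, hD.support_nodup.tail, ?_⟩
        intro w hwS w' hwD hww
        subst hww
        have hwP : w ∈ p.support := hDsup w (List.mem_of_mem_tail hwD)
        rcases hSint w (List.mem_of_mem_tail hwS) hwP with rfl | rfl
        · have := hS.support_nodup
          rw [Walk.support_eq_cons, List.nodup_cons] at this
          exact this.1 hwS
        · have := hD.support_nodup
          rw [Walk.support_eq_cons, List.nodup_cons] at this
          exact this.1 hwD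
    have hne' : C.edges.toFinset ≠ (p.rotate x hxP).edges.toFinset := by
      obtain ⟨e0, he0⟩ := exists_edge_of_ne S hxy
      intro heq
      have hmem : e0 ∈ C.edges.toFinset := by
        rw [List.mem_toFinset, hCdef, Walk.edges_append]
        exact List.mem_append_left _ he0
      rw [heq, List.mem_toFinset] at hmem
      exact hSE e0 he0 ((Walk.rotate_edges p x hxP).perm.mem_iff.mp hmem)
    have hcontr := h x x C (p.rotate x hxP) hCcyc hp'' hne'
    rw [Finset.disjoint_left] at hcontr
    obtain ⟨f0, hf0⟩ := exists_edge_of_ne D (fun hyx => hxy hyx.symm)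
    exact hcontr
      (List.mem_toFinset.mpr (by rw [hCdef, Walk.edges_append]; exact List.mem_append_right _ hf0))
      (List.mem_toFinset.mpr (Walk.edges_dropUntil_subset _ _ hf0))
  · -- at most one common vertex implies edge-disjoint
    intro h u v p q hp hq hne
    rw [Finset.disjoint_left]
    intro e hep heq
    rw [List.mem_toFinset] at hep heq
    induction e using Sym2.ind with
    | _ c d =>
      have hadj : G.Adj c d := p.adj_of_mem_edges hep
      have hcd : c ≠ d := hadj.ne
      have hcp := p.fst_mem_support_of_mem_edges hep
      have hdp := p.snd_mem_support_of_mem_edges hep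
      have hcq := q.fst_mem_support_of_mem_edges heq
      have hdq := q.snd_mem_support_of_mem_edges heq
      have hcard := h u v p q hp hq hne
      have : 1 < (p.support.toFinset ∩ q.support.toFinset).card := by
        rw [Finset.one_lt_card]
        exact ⟨c, by simp [Finset.mem_inter, hcp, hcq], d, by simp [Finset.mem_inter, hdp, hdq], hcd⟩
      omega
end

section
/- Let G be a simple graph in which any two cycles with distinct edge sets are edge-disjoint (the cactus condition). Let C be a cycle of G and let u, v be two distinct vertices lying on C. Then there is no path in G from u to v of positive length all of whose edges avoid the edge set of C and all of whose internal vertices avoid the vertices of C. -/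
open SimpleGraph Walk

private lemma mem_tail_of_closed {V : Type*} {G : SimpleGraph V} {a : V}
    {c : G.Walk a a} (hc : c ≠ SimpleGraph.Walk.nil) {w : V}
    (hw : w ∈ c.support) : w ∈ c.support.tail := by
  have hcons : c.support = a :: c.support.tail := c.support_eq_cons
  have h1 : c.support.getLast? = some a := by
    rw [List.getLast?_eq_getLast_of_ne_nil c.support_ne_nil, c.getLast_support]
  rcases (by rw [hcons] at hw; exact List.mem_cons.1 hw : w = a ∨ w ∈ c.support.tail) with h | h
  · subst h
    cases htl : c.support.tail with
    | nil =>
      exfalso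
      cases c with
      | nil => exact hc rfl
      | cons h p => simp at htl
    | cons b l =>
      have h2 : (b :: l).getLast? = some w := by
        have h3 : (w :: b :: l).getLast? = some w := by rw [← htl, ← hcons]; exact h1
        rwa [List.getLast?_cons_cons] at h3
      obtain ⟨hne, heq⟩ := List.mem_getLast?_eq_getLast (l := b :: l) (x := w)
        (Option.mem_def.2 h2)
      exact heq ▸ List.getLast_mem hne
  · exact h

/-- In a cactus graph, given a cycle `C` and two distinct vertices `u, v` on `C`,
there is no path of positive length from `u` to `v` whose edges avoid the edges
of `C` and whose internal vertices avoid the vertices of `C`. -/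
theorem stmt4 {V : Type*} [DecidableEq V] (G : SimpleGraph V)
    (hcactus : ∀ (a b : V) (p : G.Walk a a) (q : G.Walk b b),
        p.IsCycle → q.IsCycle → p.edges.toFinset ≠ q.edges.toFinset →
        Disjoint p.edges.toFinset q.edges.toFinset)
    (x : V) (C : G.Walk x x) (hC : C.IsCycle)
    (u v : V) (huv : u ≠ v) (hu : u ∈ C.support) (hv : v ∈ C.support) :
    ¬ ∃ q : G.Walk u v, q.IsPath ∧ 0 < q.length ∧
        (∀ e ∈ q.edges, e ∉ C.edges) ∧
        (∀ w ∈ q.support, w ≠ u → w ≠ v → w ∉ C.support) := by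
  rintro ⟨q, hq, hql, hqe, hqs⟩
  have hCne : C ≠ Walk.nil := hC.ne_nil
  set C' : G.Walk u u := C.rotate u hu with hC'def
  have hC' : C'.IsCycle := hC.rotate hu
  have hrot : C'.support.tail ~r C.support.tail := support_rotate C u hu
  have hrotE : C'.edges ~r C.edges := rotate_edges C u hu
  -- v is on C'
  have hv' : v ∈ C'.support := by
    have : v ∈ C.support.tail := mem_tail_of_closed hCne hv
    have : v ∈ C'.support.tail := hrot.mem_iff.2 this
    exact List.mem_of_mem_tail this
  set p2 : G.Walk v u := C'.dropUntil v hv' with hp2def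
  set p1 : G.Walk u v := C'.takeUntil v hv' with hp1def
  have hspec : p1.append p2 = C' := C'.take_spec hv'
  have hCtail : C'.support.tail = p1.support.tail ++ p2.support.tail := by
    rw [← hspec, tail_support_append]
  have hC'tnd : C'.support.tail.Nodup := hC'.support_nodup
  have hp2tnd : p2.support.tail.Nodup := by
    rw [hCtail] at hC'tnd; exact (List.nodup_append.1 hC'tnd).2.1
  have hvp1 : v ∈ p1.support.tail := end_mem_tail_support_of_ne huv p1
  have hvnp2 : v ∉ p2.support.tail := by
    rw [hCtail] at hC'tnd
    exact fun h => (List.nodup_append.1 hC'tnd).2.2 v hvp1 v h rfl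
  have hp2sub : ∀ w ∈ p2.support.tail, w ∈ C.support := by
    intro w hw
    have : w ∈ C'.support.tail := by rw [hCtail]; exact List.mem_append_right _ hw
    exact List.mem_of_mem_tail (hrot.mem_iff.1 this)
  have hC'edges : C'.edges = p1.edges ++ p2.edges := by
    rw [← hspec, edges_append]
  have hp2eC : ∀ e ∈ p2.edges, e ∈ C.edges := by
    intro e he
    exact hrotE.mem_iff.1 (by rw [hC'edges]; exact List.mem_append_right _ he)
  -- the new cycle D
  set D : G.Walk u u := q.append p2 with hDdef
  have hDedges : D.edges = q.edges ++ p2.edges := edges_append q p2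
  have hDtail : D.support.tail = q.support.tail ++ p2.support.tail :=
    tail_support_append q p2
  have hqenodup : q.edges.Nodup := hq.isTrail.edges_nodup
  have hp2enodup : p2.edges.Nodup := by
    have := hC'.isTrail.edges_nodup
    rw [hC'edges] at this
    exact (List.nodup_append.1 this).2.1
  have hDtrail : D.IsTrail := by
    constructor
    rw [hDedges, List.nodup_append]
    refine ⟨hqenodup, hp2enodup, fun e he e' he' hee => by subst hee; exact hqe e he (hp2eC e he')⟩
  have hDne : D ≠ Walk.nil := by
    intro h
    have : D.length = 0 := by rw [h]; rfl
    rw [hDdef, length_append] at this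
    omega
  have hDsupp : D.support.tail.Nodup := by
    rw [hDtail, List.nodup_append]
    refine ⟨((q.support_eq_cons ▸ hq.support_nodup : (u :: q.support.tail).Nodup).of_cons), hp2tnd, ?_⟩
    intro w hw w' hw' hww; subst hww
    have hwq : w ∈ q.support := List.mem_of_mem_tail hw
    have hwu : w ≠ u := by
      intro h; subst h
      exact (List.nodup_cons.1 (q.support_eq_cons ▸ hq.support_nodup)).1 hw
    have hwv : w ≠ v := by rintro rfl; exact hvnp2 hw'
    exact hqs w hwq hwu hwv (hp2sub w hw')
  have hD : D.IsCycle := ⟨⟨hDtrail, hDne⟩, hDsupp⟩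
  -- q has an edge not in C
  have hqene : q.edges ≠ [] := by
    intro h
    have := q.length_edges
    rw [h] at this
    simp at this
    omega
  obtain ⟨e, he⟩ := List.exists_mem_of_ne_nil _ hqene
  have hne : D.edges.toFinset ≠ C.edges.toFinset := by
    intro h
    have heD : e ∈ D.edges.toFinset := by
      rw [List.mem_toFinset, hDedges]; exact List.mem_append_left _ he
    rw [h, List.mem_toFinset] at heD
    exact hqe e he heD
  have hdisj := hcactus u x D C hD hC hne
  -- p2 has an edge, which lies in both D and C
  have hp2l : 0 < p2.length := by
    rcases Nat.eq_zero_or_pos p2.length with h | h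
    · exact absurd (Walk.eq_of_length_eq_zero h) huv.symm
    · exact h
  have hp2ene : p2.edges ≠ [] := by
    intro h
    have := p2.length_edges
    rw [h] at this
    simp at this
    omega
  obtain ⟨f, hf⟩ := List.exists_mem_of_ne_nil _ hp2ene
  have hfD : f ∈ D.edges.toFinset := by
    rw [List.mem_toFinset, hDedges]; exact List.mem_append_right _ hf
  have hfC : f ∈ C.edges.toFinset := List.mem_toFinset.2 (hp2eC f hf)
  exact (Finset.disjoint_left.1 hdisj hfD) hfC
end

section
/- Let G be a simple graph in which any two cycles with distinct edge sets are edge-disjoint (the cactus condition). Let C be a cycle of G, let s be a vertex of G not lying on C, and let P₁ and P₂ be paths in G starting at s and ending at vertices v₁ and v₂ of C respectively, such that each Pᵢ meets the vertex set of C only in its final vertex vᵢ. Then v₁ = v₂. In other words, in a cactus every path from a fixed vertex s to a cycle C that is internally disjoint from C enters C at the same, uniquely determined vertex. -/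
open SimpleGraph Walk

lemma mem_tail_support_of_closed {V : Type*} {G : SimpleGraph V} {x v : V}
    {p : G.Walk x x} (hp : ¬ p.Nil) (hv : v ∈ p.support) : v ∈ p.support.tail := by
  cases p with
  | nil => simp at hp
  | cons h q =>
    simp only [support_cons, List.tail_cons]
    simp only [support_cons, List.mem_cons] at hv
    rcases hv with rfl | hv
    · exact q.end_mem_support
    · exact hv

lemma exists_edge_of_not_nil {V : Type*} {G : SimpleGraph V} {u v : V}
    {p : G.Walk u v} (hp : ¬ p.Nil) : ∃ e, e ∈ p.edges := by
  have h : 0 < p.length := not_nil_iff_lt_length.mp hp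
  have : p.edges ≠ [] := by
    intro h0
    have := p.length_edges
    rw [h0] at this
    simp at this
    omega
  exact List.exists_mem_of_ne_nil _ this

/-- In a cactus graph, every path from a fixed vertex `s` outside a cycle `C`
to `C` that is internally disjoint from `C` enters `C` at the same, uniquely
determined vertex. -/
theorem stmt5 {V : Type*} [DecidableEq V] (G : SimpleGraph V)
    (hcactus : ∀ (a b : V) (p : G.Walk a a) (q : G.Walk b b),
        p.IsCycle → q.IsCycle → p.edges.toFinset ≠ q.edges.toFinset →
        Disjoint p.edges.toFinset q.edges.toFinset)
    (x : V) (C : G.Walk x x) (hC : C.IsCycle)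
    (s : V) (hs : s ∉ C.support)
    (v₁ v₂ : V) (hv₁ : v₁ ∈ C.support) (hv₂ : v₂ ∈ C.support)
    (P₁ : G.Walk s v₁) (P₂ : G.Walk s v₂)
    (hP₁ : P₁.IsPath) (hP₂ : P₂.IsPath)
    (hmeet₁ : ∀ w ∈ P₁.support, w ∈ C.support → w = v₁)
    (hmeet₂ : ∀ w ∈ P₂.support, w ∈ C.support → w = v₂) :
    v₁ = v₂ := by
  by_contra hne
  -- the path Q from v₁ to v₂, internally disjoint from C, edges disjoint from C
  set W : G.Walk v₁ v₂ := P₁.reverse.append P₂ with hW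
  set Q : G.Walk v₁ v₂ := W.bypass with hQdef
  have hQpath : Q.IsPath := W.bypass_isPath
  have hQsupp : ∀ w ∈ Q.support, w ∈ C.support → w = v₁ ∨ w = v₂ := by
    intro w hw hwC
    have hw' : w ∈ W.support := W.support_bypass_subset hw
    rw [hW, mem_support_append_iff, support_reverse, List.mem_reverse] at hw'
    rcases hw' with h1 | h2
    · exact Or.inl (hmeet₁ w h1 hwC)
    · exact Or.inr (hmeet₂ w h2 hwC)
  have hQedges : ∀ e ∈ Q.edges, e ∉ C.edges := by
    intro e he heC
    have he' : e ∈ W.edges := W.edges_bypass_subset he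
    rw [hW, edges_append, edges_reverse, List.mem_append, List.mem_reverse] at he'
    induction e with
    | h a b =>
      have haC : a ∈ C.support := C.fst_mem_support_of_mem_edges heC
      have hbC : b ∈ C.support := C.snd_mem_support_of_mem_edges heC
      have hab : a ≠ b := G.ne_of_adj (Q.adj_of_mem_edges he)
      rcases he' with h1 | h2
      · exact hab ((hmeet₁ a (P₁.fst_mem_support_of_mem_edges h1) haC).trans
          (hmeet₁ b (P₁.snd_mem_support_of_mem_edges h1) hbC).symm)
      · exact hab ((hmeet₂ a (P₂.fst_mem_support_of_mem_edges h2) haC).trans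
          (hmeet₂ b (P₂.snd_mem_support_of_mem_edges h2) hbC).symm)
  -- rotate C to start at v₂
  set C' : G.Walk v₂ v₂ := C.rotate v₂ hv₂ with hC'def
  have hC' : C'.IsCycle := hC.rotate hv₂
  have hCsupp : ∀ w ∈ C'.support, w ∈ C.support := by
    intro w hw
    rcases List.mem_cons.mp (C'.support_eq_cons ▸ hw : w ∈ v₂ :: C'.support.tail) with h | h
    · exact h ▸ hv₂
    · have := (support_rotate C v₂ hv₂).mem_iff.mp h
      exact C.support_eq_cons ▸ List.mem_cons_of_mem _ this
  have hv₁' : v₁ ∈ C'.support := by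
    have h1 : v₁ ∈ C.support.tail := mem_tail_support_of_closed hC.not_nil hv₁
    have := (support_rotate C v₂ hv₂).mem_iff.mpr h1
    exact C'.support_eq_cons ▸ List.mem_cons_of_mem _ this
  -- R : the path from v₂ to v₁ along C'
  set R : G.Walk v₂ v₁ := C'.takeUntil v₁ hv₁' with hRdef
  set D : G.Walk v₁ v₂ := C'.dropUntil v₁ hv₁' with hDdef
  have hsplit : R.append D = C' := C'.take_spec hv₁'
  have htails : C'.support.tail = R.support.tail ++ D.support.tail := by
    conv_lhs => rw [← hsplit]
    exact tail_support_append R D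
  have hnodup := hC'.support_nodup
  rw [htails, List.nodup_append] at hnodup
  obtain ⟨hRtail, hDtail, hdisj⟩ := hnodup
  have hv₂D : v₂ ∈ D.support.tail := end_mem_tail_support_of_ne hne D
  have hv₂R : v₂ ∉ R.support.tail := fun h => hdisj v₂ h v₂ hv₂D rfl
  have hRpath : R.IsPath := by
    rw [isPath_def, R.support_eq_cons]
    exact List.nodup_cons.mpr ⟨hv₂R, hRtail⟩
  have hRC : ∀ e ∈ R.edges, e ∈ C.edges := by
    intro e he
    exact (rotate_edges C v₂ hv₂).mem_iff.mp (C'.edges_takeUntil_subset hv₁' he)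
  have hRne : ¬ R.Nil := not_nil_of_ne (Ne.symm hne)
  have hQne : ¬ Q.Nil := not_nil_of_ne hne
  have hv₁Q : v₁ ∉ Q.support.tail := by
    have h := hQpath.support_nodup
    rw [Q.support_eq_cons, List.nodup_cons] at h
    exact h.1
  -- the cycle D₀ = Q ++ R
  set D₀ : G.Walk v₁ v₁ := Q.append R with hD₀def
  have hD₀cycle : D₀.IsCycle := by
    rw [isCycle_def]
    refine ⟨?_, ?_, ?_⟩
    · rw [isTrail_def, hD₀def, edges_append, List.nodup_append]
      exact ⟨hQpath.isTrail.edges_nodup, hRpath.isTrail.edges_nodup,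
        fun e heQ e' heR hee => hQedges e heQ (hee ▸ hRC e' heR)⟩
    · intro h
      have h0 : D₀.length = 0 := by rw [h]; rfl
      rw [hD₀def, length_append] at h0
      have hQ0 : Q.length = 0 := by omega
      exact hQne (nil_iff_length_eq.mpr hQ0)
    · rw [hD₀def, tail_support_append, List.nodup_append]
      refine ⟨hQpath.support_nodup.tail, hRpath.support_nodup.tail, ?_⟩
      intro w hwQ w' hwR hww
      rw [← hww] at hwR
      have hwQ' : w ∈ Q.support := Q.support_eq_cons ▸ List.mem_cons_of_mem _ hwQ
      have hwR' : w ∈ R.support := R.support_eq_cons ▸ List.mem_cons_of_mem _ hwR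
      have hwC : w ∈ C.support :=
        hCsupp w (C'.support_takeUntil_subset hv₁' hwR')
      rcases hQsupp w hwQ' hwC with rfl | rfl
      · exact hv₁Q hwQ
      · exact hv₂R hwR
  -- use the cactus hypothesis
  obtain ⟨e, heQ⟩ := exists_edge_of_not_nil hQne
  obtain ⟨f, hfR⟩ := exists_edge_of_not_nil hRne
  have heD₀ : e ∈ D₀.edges := by
    rw [hD₀def, edges_append, List.mem_append]; exact Or.inl heQ
  have hfD₀ : f ∈ D₀.edges := by
    rw [hD₀def, edges_append, List.mem_append]; exact Or.inr hfR
  have hneq : D₀.edges.toFinset ≠ C.edges.toFinset := by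
    intro h
    have : e ∈ C.edges.toFinset := h ▸ List.mem_toFinset.mpr heD₀
    exact hQedges e heQ (List.mem_toFinset.mp this)
  have hdisjoint := hcactus v₁ x D₀ C hD₀cycle hC hneq
  exact (Finset.disjoint_left.mp hdisjoint (List.mem_toFinset.mpr hfD₀))
    (List.mem_toFinset.mpr (hRC f hfR))
end
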